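/- Let A be a commutative integral domain with multiplicative identity e that is an associative algebra over ℝ. If there exists n ≥ 1 such that H_n(A) = 0, then A is a Kadison algebra. -/

import Mathlib

open scoped BigOperators

/-- The coboundary operators `d_n : U_n(A) → U_{n+1}(A)`, acting on raw cochains
(`U_n(A)` is the space of `(n+1)`-linear maps `A^{n+1} → A`):
`d₀(f)(x₁,x₂) = f(x₁x₂)`;
`d₁(Ψ)(x₁,x₂,x₃) = Ψ(x₁x₂,x₃) − Ψ(x₁x₃,x₂)`;
for odd `2n−1` with `n ≥ 2`,
`d_{2n−1}(Φ)(x₁,…,x_{2n+1}) = Φ(x₁x₂,x₃,…,x_{2n},x_{2n+1}) − Φ(x₁x₂,x₃,…,x_{2n+1},x_{2n})`;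
for even `2n` with `n ≥ 1`,
`d_{2n}(Φ)(x₁,…,x_{2n+2}) = Σ_{σ ∈ S_{2n+2}} Φ(x_{σ(1)}x_{σ(2)}, x_{σ(3)}, …, x_{σ(2n+2)})`. -/
def cob (A : Type*) [CommRing A] : (n : ℕ) → ((Fin (n + 1) → A) → A) → (Fin (n + 2) → A) → A
  | 0, f, x => f ![x 0 * x 1]
  | 1, Ψ, x => Ψ ![x 0 * x 1, x 2] - Ψ ![x 0 * x 2, x 1]
  | m + 2, Φ, x =>
    if (m + 2) % 2 = 0 then
      ∑ σ : Equiv.Perm (Fin (m + 4)),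
        Φ (Fin.cons (x (σ ⟨0, by omega⟩) * x (σ ⟨1, by omega⟩))
            fun j : Fin (m + 2) => x (σ j.succ.succ))
    else
      Φ (Fin.cons (x ⟨0, by omega⟩ * x ⟨1, by omega⟩) fun j : Fin (m + 2) => x j.succ.succ) -
      Φ (Fin.cons (x ⟨0, by omega⟩ * x ⟨1, by omega⟩) fun j : Fin (m + 2) =>
          x (Equiv.swap (Fin.last (m + 3)) ((Fin.last (m + 2)).castSucc) j.succ.succ))

/-- A linear map `T : A → A` is a multiplier if `T(ab) = aT(b)` for all `a, b ∈ A`. -/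
def IsMultiplier {A : Type*} [CommRing A] [Algebra ℝ A] (T : A →ₗ[ℝ] A) : Prop :=
  ∀ a b : A, T (a * b) = a * T b

/-- A bilinear map `Ψ : A × A → A` is a 2-multiplier if for each `a ∈ A` the partial maps
`x ↦ Ψ(a,x)` and `x ↦ Ψ(x,a)` are multipliers. -/
def Is2Multiplier {A : Type*} [CommRing A] [Algebra ℝ A] (Ψ : A →ₗ[ℝ] A →ₗ[ℝ] A) : Prop :=
  ∀ a : A, (∀ x y : A, Ψ a (x * y) = x * Ψ a y) ∧ (∀ x y : A, Ψ (x * y) a = x * Ψ y a)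

/-- A bilinear map `Ψ` is a local 2-multiplier if for each `(a,b) ∈ A²` there is a
2-multiplier `Ψ_{a,b}` with `Ψ(a,b) = Ψ_{a,b}(a,b)`. -/
def IsLocal2Multiplier {A : Type*} [CommRing A] [Algebra ℝ A]
    (Ψ : A →ₗ[ℝ] A →ₗ[ℝ] A) : Prop :=
  ∀ a b : A, ∃ Ψ' : A →ₗ[ℝ] A →ₗ[ℝ] A, Is2Multiplier Ψ' ∧ Ψ a b = Ψ' a b

/-- `A` is a Kadison algebra if every local 2-multiplier on `A²` is a 2-multiplier. -/
def IsKadison (A : Type*) [CommRing A] [Algebra ℝ A] : Prop :=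
  ∀ Ψ : A →ₗ[ℝ] A →ₗ[ℝ] A, IsLocal2Multiplier Ψ → Is2Multiplier Ψ

private lemma aux_self_add'' {A : Type*} [AddCommGroup A] [Module ℝ A] {a : A}
    (h : a + a = 0) : a = 0 := by
  have h2 : (2 : ℝ) • a = 0 := by rw [two_smul]; exact h
  have h3 : a = (2⁻¹ : ℝ) • ((2 : ℝ) • a) := by rw [smul_smul]; norm_num
  rw [h3, h2, smul_zero]

private lemma aux_sum_pair'' {B : Type*} [AddCommGroup B] [Module ℝ B] {ι : Type*} [Fintype ι]
    (e : ι ≃ ι) (F : ι → B) (h : ∀ i, F (e i) = -F i) : ∑ i, F i = 0 := by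
  have h1 : ∑ i, F (e i) = ∑ i, F i := Fintype.sum_equiv e _ _ (fun i => rfl)
  apply aux_self_add''
  calc ∑ i, F i + ∑ i, F i = ∑ i, F (e i) + ∑ i, F i := by rw [h1]
    _ = ∑ i, (-F i) + ∑ i, F i := by simp only [h]
    _ = 0 := by rw [Finset.sum_neg_distrib]; abel


-- even case: n = k + 2 with k even
private lemma key_even {A : Type*} [CommRing A] [Algebra ℝ A] (k : ℕ) (hk : k % 2 = 0)
    (hcoh : ∀ Ψ : MultilinearMap ℝ (fun _ : Fin (k + 2 + 1 + 1) => A) A,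
        cob A (k + 2 + 1) ⇑Ψ = 0 →
        ∃ Φ : MultilinearMap ℝ (fun _ : Fin (k + 2 + 1) => A) A, ⇑Ψ = cob A (k + 2) ⇑Φ)
    (T : A →ₗ[ℝ] A) (a : A) : T a = a * T 1 := by
  classical
  set Psi : MultilinearMap ℝ (fun _ : Fin (k + 4) => A) A :=
    (MultilinearMap.mkPiAlgebra ℝ (Fin (k + 4)) A).compLinearMap
      (Fin.cons T (fun _ => LinearMap.id)) with hPsidef
  have hPsi : ∀ (u : A) (f : Fin (k + 3) → A),
      Psi (Fin.cons u f) = T u * ∏ i : Fin (k + 3), f i := by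
    intro u f
    rw [hPsidef, MultilinearMap.compLinearMap_apply, MultilinearMap.mkPiAlgebra_apply,
      Fin.prod_univ_succ]
    simp only [Fin.cons_zero, Fin.cons_succ, LinearMap.id_coe, id_eq]
  -- cocycle
  have hc : cob A (k + 2 + 1) ⇑Psi = 0 := by
    funext x
    show cob A (k + 1 + 2) ⇑Psi x = 0
    rw [cob]
    rw [if_neg (by omega)]
    rw [Fin.mk_zero, Fin.mk_one]  -- maybe not needed
    rw [hPsi, hPsi, sub_eq_zero]
    congr 1
    apply Fintype.prod_equiv (Equiv.swap (Fin.last (k + 2)) (⟨k + 1, by omega⟩ : Fin (k + 3)))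
    intro j
    have hinj : Function.Injective (fun j : Fin (k + 3) => j.succ.succ) :=
      fun i j hij => Fin.succ_injective _ (Fin.succ_injective _ hij)
    have e1 : Fin.last (k + 1 + 3) = (fun j : Fin (k + 3) => j.succ.succ) (Fin.last (k + 2)) := rfl
    have e2 : (Fin.last (k + 1 + 2)).castSucc
        = (fun j : Fin (k + 3) => j.succ.succ) (⟨k + 1, by omega⟩ : Fin (k + 3)) := rfl
    rw [e1, e2, hinj.swap_apply, Equiv.swap_apply_self]
  obtain ⟨Φ, hΦ⟩ := hcoh Psi hc
  set x0 : Fin (k + 4) → A := Fin.cons a (fun _ => 1) with hx0def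
  set x1 : Fin (k + 4) → A := Fin.cons 1 (Fin.cons a (fun _ => 1)) with hx1def
  have hτ : ∀ i : Fin (k + 4), x1 i = x0 (Equiv.swap 0 1 i) := by
    intro i
    induction i using Fin.cases with
    | zero =>
      rw [Equiv.swap_apply_left, hx1def, hx0def, Fin.cons_zero, ← Fin.succ_zero_eq_one,
        Fin.cons_succ]
    | succ j =>
      induction j using Fin.cases with
      | zero =>
        rw [Fin.succ_zero_eq_one, Equiv.swap_apply_right, hx1def, hx0def, Fin.cons_zero,
          ← Fin.succ_zero_eq_one, Fin.cons_succ, Fin.cons_zero]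
      | succ m =>
        have h1 : m.succ.succ ≠ (0 : Fin (k + 4)) := Fin.succ_ne_zero _
        have h2 : m.succ.succ ≠ (1 : Fin (k + 4)) := by
          rw [← Fin.succ_zero_eq_one]
          intro hcon
          exact Fin.succ_ne_zero _ (Fin.succ_injective _ hcon)
        rw [Equiv.swap_apply_of_ne_of_ne h1 h2, hx1def, hx0def, Fin.cons_succ, Fin.cons_succ,
          Fin.cons_succ]
  have hcob_eq : cob A (k + 2) ⇑Φ x1 = cob A (k + 2) ⇑Φ x0 := by
    rw [cob, cob, if_pos (by omega), if_pos (by omega)]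
    apply Fintype.sum_equiv (Equiv.mulLeft (Equiv.swap (0 : Fin (k + 4)) 1))
    intro σ
    simp only [hτ, Equiv.coe_mulLeft, Equiv.Perm.mul_apply]
  have e0 := congrFun hΦ x0
  have e1 := congrFun hΦ x1
  have v0 : Psi x0 = T a * 1 := by
    rw [hx0def, hPsi, Finset.prod_const_one]
  have v1 : Psi x1 = T 1 * (a * 1) := by
    rw [hx1def, hPsi, Fin.prod_univ_succ, Fin.cons_zero]
    simp only [Fin.cons_succ, Finset.prod_const_one]
  have key : T 1 * (a * 1) = T a * 1 := by
    rw [← v0, ← v1, e0, e1, hcob_eq]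
  linear_combination -key

-- odd case, n = k + 2 with k odd
private lemma key_odd {A : Type*} [CommRing A] [Algebra ℝ A] (k : ℕ) (hk : k % 2 = 1)
    (hcoh : ∀ Ψ : MultilinearMap ℝ (fun _ : Fin (k + 2 + 1 + 1) => A) A,
        cob A (k + 2 + 1) ⇑Ψ = 0 →
        ∃ Φ : MultilinearMap ℝ (fun _ : Fin (k + 2 + 1) => A) A, ⇑Ψ = cob A (k + 2) ⇑Φ)
    (T : A →ₗ[ℝ] A) (a : A) : T a = a * T 1 := by
  classical
  set Psi : MultilinearMap ℝ (fun _ : Fin (k + 4) => A) A :=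
    (MultilinearMap.mkPiAlgebra ℝ (Fin (k + 4)) A).compLinearMap
      (Fin.cons LinearMap.id (Fin.cons T (fun _ => LinearMap.id))) -
    (MultilinearMap.mkPiAlgebra ℝ (Fin (k + 4)) A).compLinearMap
      (Fin.cons LinearMap.id (Fin.cons LinearMap.id (Fin.cons T (fun _ => LinearMap.id))))
      with hPsidef
  have hPsi : ∀ (u : A) (f : Fin (k + 3) → A),
      Psi (Fin.cons u f)
        = u * (T (f 0) * (f 1 * ∏ i : Fin (k + 1), f i.succ.succ))
          - u * (f 0 * (T (f 1) * ∏ i : Fin (k + 1), f i.succ.succ)) := by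
    intro u f
    rw [hPsidef]
    simp only [MultilinearMap.sub_apply, MultilinearMap.compLinearMap_apply,
      MultilinearMap.mkPiAlgebra_apply, Fin.prod_univ_succ, Fin.cons_zero, Fin.cons_succ,
      LinearMap.id_coe, id_eq, Fin.succ_zero_eq_one]
  have hanti : ∀ (u : A) (f : Fin (k + 3) → A),
      Psi (Fin.cons u (fun j => f (Equiv.swap 0 1 j))) = -Psi (Fin.cons u f) := by
    intro u f
    rw [hPsi, hPsi]
    have hs0 : Equiv.swap (0 : Fin (k + 3)) 1 0 = 1 := Equiv.swap_apply_left _ _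
    have hs1 : Equiv.swap (0 : Fin (k + 3)) 1 1 = 0 := Equiv.swap_apply_right _ _
    have hss : ∀ i : Fin (k + 1), Equiv.swap (0 : Fin (k + 3)) 1 i.succ.succ = i.succ.succ := by
      intro i
      refine Equiv.swap_apply_of_ne_of_ne (Fin.succ_ne_zero _) ?_
      rw [← Fin.succ_zero_eq_one]
      intro hcon
      exact Fin.succ_ne_zero _ (Fin.succ_injective _ hcon)
    have hprod : ∏ i : Fin (k + 1), f (Equiv.swap (0 : Fin (k + 3)) 1 i.succ.succ)
        = ∏ i : Fin (k + 1), f i.succ.succ :=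
      Finset.prod_congr rfl (fun i _ => by rw [hss])
    simp only [hs0, hs1, hprod]
    ring
  have hc : cob A (k + 2 + 1) ⇑Psi = 0 := by
    funext x
    show cob A (k + 1 + 2) ⇑Psi x = 0
    rw [cob, if_pos (by omega)]
    refine aux_sum_pair''
      (Equiv.mulRight (Equiv.swap ((0 : Fin (k + 3)).succ.succ) ((1 : Fin (k + 3)).succ.succ)))
      _ ?_
    intro σ
    have hinj : Function.Injective (fun j : Fin (k + 3) => j.succ.succ) :=
      fun i j hij => Fin.succ_injective _ (Fin.succ_injective _ hij)
    set τ := Equiv.swap ((0 : Fin (k + 3)).succ.succ) ((1 : Fin (k + 3)).succ.succ) with hτdef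
    have hτ0 : τ (⟨0, by omega⟩ : Fin (k + 1 + 4)) = ⟨0, by omega⟩ := by
      refine Equiv.swap_apply_of_ne_of_ne ?_ ?_ <;>
        (apply Fin.ne_of_val_ne; simp only [Fin.val_succ, Fin.val_zero, Fin.val_one, Fin.val_mk]; omega)
    have hτ1 : τ (⟨1, by omega⟩ : Fin (k + 1 + 4)) = ⟨1, by omega⟩ := by
      refine Equiv.swap_apply_of_ne_of_ne ?_ ?_ <;>
        (apply Fin.ne_of_val_ne; simp only [Fin.val_succ, Fin.val_zero, Fin.val_one, Fin.val_mk]; omega)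
    have hτss : ∀ j : Fin (k + 3), τ j.succ.succ = (Equiv.swap (0 : Fin (k + 3)) 1 j).succ.succ :=
      fun j => hinj.swap_apply 0 1 j
    simp only [Equiv.coe_mulRight, Equiv.Perm.mul_apply, hτ0, hτ1, hτss]
    exact hanti (x (σ ⟨0, by omega⟩) * x (σ ⟨1, by omega⟩)) (fun j => x (σ j.succ.succ))
  obtain ⟨Φ, hΦ⟩ := hcoh Psi hc
  set x0 : Fin (k + 4) → A := Fin.cons 1 (Fin.cons a (fun _ => 1)) with hx0def
  have hx0ss : ∀ i : Fin (k + 2), x0 i.succ.succ = 1 := by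
    intro i
    rw [hx0def, Fin.cons_succ, Fin.cons_succ]
  have hcx : cob A (k + 2) ⇑Φ x0 = 0 := by
    rw [cob, if_neg (by omega), sub_eq_zero]
    have hcs : (Fin.last (k + 2)).castSucc = ((⟨k, by omega⟩ : Fin (k + 2))).succ.succ := rfl
    have hls : Fin.last (k + 3) = ((⟨k + 1, by omega⟩ : Fin (k + 2))).succ.succ := rfl
    have harg : (fun j : Fin (k + 2) => x0 j.succ.succ)
        = (fun j : Fin (k + 2) =>
            x0 (Equiv.swap (Fin.last (k + 3)) ((Fin.last (k + 2)).castSucc) j.succ.succ)) := by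
      funext j
      by_cases h1 : j.succ.succ = Fin.last (k + 3)
      · rw [h1, Equiv.swap_apply_left, hcs, hx0ss, hls, hx0ss]
      · by_cases h2 : j.succ.succ = (Fin.last (k + 2)).castSucc
        · rw [h2, Equiv.swap_apply_right, hcs, hx0ss, hls, hx0ss]
        · rw [Equiv.swap_apply_of_ne_of_ne h1 h2]
    rw [harg]
  have hval : Psi x0 = 1 * (T a * (1 * 1)) - 1 * (a * (T 1 * 1)) := by
    rw [hx0def, hPsi]
    have hf1 : (Fin.cons a (fun _ => (1 : A)) : Fin (k + 3) → A) 1 = 1 := by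
      rw [← Fin.succ_zero_eq_one, Fin.cons_succ]
    have hfss : ∀ i : Fin (k + 1),
        (Fin.cons a (fun _ => (1 : A)) : Fin (k + 3) → A) i.succ.succ = 1 := by
      intro i; rw [Fin.cons_succ]
    simp only [Fin.cons_zero, hf1, hfss, Finset.prod_const_one]
  have e : Psi x0 = 0 := (congrFun hΦ x0).trans hcx
  rw [hval] at e
  linear_combination e

private lemma key_one {A : Type*} [CommRing A] [Algebra ℝ A]
    (hcoh : ∀ Ψ : MultilinearMap ℝ (fun _ : Fin 3 => A) A, cob A 2 ⇑Ψ = 0 →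
        ∃ Φ : MultilinearMap ℝ (fun _ : Fin 2 => A) A, ⇑Ψ = cob A 1 ⇑Φ)
    (T : A →ₗ[ℝ] A) (a : A) : T a = a * T 1 := by
  classical
  set Psi : MultilinearMap ℝ (fun _ : Fin 3 => A) A :=
    { toFun := fun y => T (y 0) * (y 1 * y 2) - y 0 * T (y 1 * y 2)
      map_update_add' := by
        intro dec y i u v
        obtain rfl : dec = instDecidableEqFin 3 := Subsingleton.elim _ _
        fin_cases i <;>
          · simp [Function.update, map_add, add_mul, mul_add]
            ring
      map_update_smul' := by
        intro dec y i c u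
        obtain rfl : dec = instDecidableEqFin 3 := Subsingleton.elim _ _
        fin_cases i <;>
          · simp [Function.update, map_smul, smul_sub, smul_mul_assoc, mul_smul_comm]
      } with hPsidef
  have hv : ∀ (u : A) (w : Fin 2 → A),
      Psi (Fin.cons u w) = T u * (w 0 * w 1) - u * T (w 0 * w 1) := by
    intro u w
    have e1 : (1 : Fin 3) = (0 : Fin 2).succ := rfl
    have e2 : (2 : Fin 3) = (1 : Fin 2).succ := rfl
    rw [hPsidef]
    simp only [MultilinearMap.coe_mk]
    rw [e1, e2, Fin.cons_succ, Fin.cons_succ, Fin.cons_zero]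
  have hc : cob A 2 ⇑Psi = 0 := by
    funext x
    show cob A (0 + 2) ⇑Psi x = 0
    rw [cob, if_pos (by omega)]
    set τ : Equiv.Perm (Fin 4) :=
      Equiv.swap (0 : Fin 4) 2 * Equiv.swap (1 : Fin 4) 3 with hτdef
    refine aux_sum_pair'' (Equiv.mulRight τ) _ ?_
    intro σ
    simp only [Equiv.coe_mulRight, Equiv.Perm.mul_apply]
    rw [hv, hv]
    have hA : τ (⟨0, by omega⟩ : Fin 4) = (0 : Fin 2).succ.succ := by decide
    have hB : τ (⟨1, by omega⟩ : Fin 4) = (1 : Fin 2).succ.succ := by decide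
    have hC : τ ((0 : Fin 2).succ.succ) = ⟨0, by omega⟩ := by decide
    have hD : τ ((1 : Fin 2).succ.succ) = ⟨1, by omega⟩ := by decide
    rw [hA, hB, hC, hD]
    ring
  obtain ⟨Φ, hΦ⟩ := hcoh Psi hc
  have e1 := congrFun hΦ ![1, a, 1]
  have e2 := congrFun hΦ ![1, 1, a]
  rw [show (![1, a, 1] : Fin 3 → A) = Fin.cons 1 ![a, 1] from rfl, hv] at e1
  rw [show (![1, 1, a] : Fin 3 → A) = Fin.cons 1 ![1, a] from rfl, hv] at e2
  simp only [Matrix.cons_val_zero, Matrix.cons_val_one, Matrix.head_cons] at e1 e2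
  rw [cob] at e1 e2
  simp only [show ((1 : Fin 3)) = (0 : Fin 2).succ from rfl,
    show ((2 : Fin 3)) = (1 : Fin 2).succ from rfl, Fin.cons_succ, Fin.cons_zero,
    Matrix.cons_val_zero, Matrix.cons_val_one, Matrix.head_cons, mul_one, one_mul] at e1 e2
  have h0 : T 1 * a - T a = 0 := by
    apply aux_self_add''
    nth_rewrite 1 [e1]
    nth_rewrite 1 [e2]
    ring
  linear_combination -h0


/-- Let `A` be a commutative integral domain that is an `ℝ`-algebra. If
there exists `n ≥ 1` with `H_n(A) = ker(d_{n+1})/im(d_n) = 0` (every `(n+2)`-linear cocycle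
is a coboundary), then `A` is a Kadison algebra. -/
theorem isKadison_of_vanishing_cohomology (A : Type*) [CommRing A] [IsDomain A] [Algebra ℝ A]
    (h : ∃ n : ℕ, 1 ≤ n ∧
      ∀ Ψ : MultilinearMap ℝ (fun _ : Fin (n + 1 + 1) => A) A, cob A (n + 1) ⇑Ψ = 0 →
        ∃ Φ : MultilinearMap ℝ (fun _ : Fin (n + 1) => A) A, ⇑Ψ = cob A n ⇑Φ) :
    IsKadison A := by
  obtain ⟨n, hn1, hcoh⟩ := h
  have key : ∀ (T : A →ₗ[ℝ] A) (a : A), T a = a * T 1 := by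
    intro T a
    match n, hn1, hcoh with
    | 0, hn1, _ => omega
    | 1, _, hcoh => exact key_one hcoh T a
    | (k + 2), _, hcoh =>
      rcases Nat.even_or_odd k with he | ho
      · exact key_even k (Nat.even_iff.mp he) hcoh T a
      · exact key_odd k (Nat.odd_iff.mp ho) hcoh T a
  intro Ψ _
  intro b
  constructor
  · intro x y
    rw [key (Ψ b) (x * y), key (Ψ b) y]
    ring
  · intro x y
    have h1 := key (LinearMap.flip Ψ b) (x * y)
    have h2 := key (LinearMap.flip Ψ b) y
    simp only [LinearMap.flip_apply] at h1 h2
    rw [h1, h2]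
    ring
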